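/- arXiv:1801.04578 — 2 statements merged into one kernel-verified Lean document; each statement's English description precedes it below -/
import Mathlib

section
/- Let n ≥ 2 and 0 < λ ≤ (n−1)/2. There exists a constant C_λ > 0, depending only on n and λ, such that for every z ∈ ℝⁿ, every ρ > 0 and every x ∈ ℝⁿ, ∫_{S(z,ρ)} |x − y|^{−((n−1)−2λ)} dσ(y) ≤ C_λ ρ^{2λ}, where the integral is taken in the extended sense (it may a priori be infinite since the integrand can blow up when y = x). -/
open MeasureTheory Real Filter Set Metric
open scoped FourierTransform RealInnerProductSpace SchwartzMap ENNReal

noncomputable section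

abbrev En (n : ℕ) := EuclideanSpace ℝ (Fin n)

/-- Japanese bracket `⟨x⟩ = (1+|x|²)^{1/2}`. -/
def jap {n : ℕ} (x : En n) : ℝ := Real.sqrt (1 + ‖x‖ ^ 2)

/-- `k(η,θ) = -|η|²/(θ·η)`. -/
def kval {n : ℕ} (θ η : En n) : ℝ := -‖η‖ ^ 2 / ⟪θ, η⟫

/-- The Ewald sphere `Γ_r(-2kθ)`, of center `-kθ` and radius `rk`. -/
def ewald {n : ℕ} (θ η : En n) (r : ℝ) : Set (En n) :=
  Metric.sphere (-(kval θ η • θ)) (r * kval θ η)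

/-- The spherical operator `S_{θ,r}`. -/
def Sop {n : ℕ} (θ : En n) (r : ℝ) (q : En n → ℂ) (η : En n) : ℂ :=
  if ⟪η, θ⟫ < 0 then
    ((kval θ η * (r + 1))⁻¹ : ℝ) •
      ∫ ξ in ewald θ η r, 𝓕 q ξ * 𝓕 q (η - ξ) ∂μH[(n : ℝ) - 1]
  else 0

/-- The operator `K_r(g₁,g₂)`. -/
def Kop {n : ℕ} {G₁ G₂ : Type*} [NormedAddCommGroup G₁] [NormedAddCommGroup G₂]
    (θ : En n) (r : ℝ) (g₁ : En n → G₁) (g₂ : En n → G₂) (η : En n) : ℝ :=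
  if ⟪η, θ⟫ < 0 then
    (kval θ η)⁻¹ * ∫ ξ in ewald θ η r, ‖g₁ ξ‖ * ‖g₂ (η - ξ)‖ ∂μH[(n : ℝ) - 1]
  else 0

/-- Weighted norm `‖F‖_{L²_α}`. -/
def L2w {n : ℕ} {G : Type*} [NormedAddCommGroup G] (α : ℝ) (F : En n → G) : ℝ :=
  (∫ η, jap η ^ (2 * α) * ‖F η‖ ^ 2) ^ (1/2 : ℝ)

/-- Weighted Sobolev norm `‖q‖_{W^{β,2}_δ} = ‖⟨·⟩^δ 𝓕⁻¹(⟨·⟩^β 𝓕q)‖_{L²}`. -/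
def sobNorm {n : ℕ} (β δ : ℝ) (q : En n → ℂ) : ℝ :=
  (∫ x, jap x ^ (2 * δ) * ‖𝓕⁻ (fun ξ => (jap ξ ^ β : ℝ) • 𝓕 q ξ) x‖ ^ 2) ^ (1/2 : ℝ)

/-- A smooth radial cutoff vanishing for `|ξ| < C₀` and equal to `1` for `|ξ| > 2C₀`. -/
structure IsCutoff {n : ℕ} (C₀ : ℝ) (χ : En n → ℝ) : Prop where
  smooth : ContDiff ℝ (⊤ : ℕ∞) χ
  mem_Icc : ∀ ξ, χ ξ ∈ Set.Icc (0 : ℝ) 1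
  eq_one : ∀ ξ : En n, 2 * C₀ < ‖ξ‖ → χ ξ = 1
  eq_zero : ∀ ξ : En n, ‖ξ‖ < C₀ → χ ξ = 0


section SphereAux

open scoped NNReal Pointwise

variable {n : ℕ}

/-- sum of squares of coordinates -/
def sqsum {n : ℕ} (i : Fin n) (y : {j : Fin n // j ≠ i} → ℝ) : ℝ := ∑ j, (y j)^2

def Phi {n : ℕ} (i : Fin n) (ε : ℝ) (y : {j : Fin n // j ≠ i} → ℝ) : En n :=
  WithLp.toLp 2 (fun k => if h : k = i then ε * Real.sqrt (1 - sqsum i y) else y ⟨k, h⟩)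

lemma coord_abs_le {i : Fin n} {y : {j : Fin n // j ≠ i} → ℝ} (hy : sqsum i y ≤ 1) (j) :
    |y j| ≤ 1 := by
  have h1 : (y j)^2 ≤ sqsum i y := by
    apply Finset.single_le_sum (f := fun j => (y j)^2) (fun k _ => sq_nonneg _) (Finset.mem_univ j)
  have := h1.trans hy
  nlinarith [abs_nonneg (y j), sq_abs (y j)]

lemma sqsum_diff_le {i : Fin n} {y y' : {j : Fin n // j ≠ i} → ℝ}
    (hy : sqsum i y ≤ 1) (hy' : sqsum i y' ≤ 1) :
    |sqsum i y - sqsum i y'| ≤ 2 * n * dist y y' := by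
  have h : sqsum i y - sqsum i y' = ∑ j, ((y j)^2 - (y' j)^2) := by
    rw [sqsum, sqsum, ← Finset.sum_sub_distrib]
  rw [h]
  calc |∑ j, ((y j)^2 - (y' j)^2)| ≤ ∑ j, |(y j)^2 - (y' j)^2| := Finset.abs_sum_le_sum_abs _ _
    _ ≤ ∑ _j : {j : Fin n // j ≠ i}, 2 * dist y y' := by
        apply Finset.sum_le_sum
        intro j _
        have h1 : |y j - y' j| ≤ dist y y' := by
          rw [← Real.dist_eq]; exact dist_le_pi_dist y y' j
        have h2 : |y j + y' j| ≤ 2 := by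
          have := coord_abs_le hy j; have := coord_abs_le hy' j
          have := abs_add_le (y j) (y' j); linarith
        have : (y j)^2 - (y' j)^2 = (y j - y' j) * (y j + y' j) := by ring
        rw [this, abs_mul]
        calc |y j - y' j| * |y j + y' j| ≤ dist y y' * 2 := by
              apply mul_le_mul h1 h2 (abs_nonneg _) dist_nonneg
          _ = 2 * dist y y' := by ring
    _ ≤ 2 * n * dist y y' := by
        rw [Finset.sum_const, nsmul_eq_mul, Finset.card_univ]
        have hcard : (Fintype.card {j : Fin n // j ≠ i} : ℝ) ≤ n := by
          have : Fintype.card {j : Fin n // j ≠ i} ≤ n := by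
            simpa using (Fintype.card_subtype_le _)
          exact_mod_cast this
        nlinarith [dist_nonneg (x := y) (y := y')]

lemma sqrt_diff_le {a b m : ℝ} (hm : 0 < m) (ha : m ≤ 1 - a) (hb : m ≤ 1 - b) :
    |Real.sqrt (1 - a) - Real.sqrt (1 - b)| ≤ |a - b| / (2 * Real.sqrt m) := by
  have hsa : Real.sqrt m ≤ Real.sqrt (1 - a) := Real.sqrt_le_sqrt ha
  have hsb : Real.sqrt m ≤ Real.sqrt (1 - b) := Real.sqrt_le_sqrt hb
  have hsm : 0 < Real.sqrt m := Real.sqrt_pos.2 hm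
  have key : (Real.sqrt (1-a) - Real.sqrt (1-b)) * (Real.sqrt (1-a) + Real.sqrt (1-b)) = b - a := by
    have h1 : Real.sqrt (1-a) ^ 2 = 1 - a := Real.sq_sqrt (by linarith)
    have h2 : Real.sqrt (1-b) ^ 2 = 1 - b := Real.sq_sqrt (by linarith)
    nlinarith
  rw [le_div_iff₀ (by positivity)]
  have habs : |Real.sqrt (1-a) - Real.sqrt (1-b)| * (Real.sqrt (1-a) + Real.sqrt (1-b)) = |a - b| := by
    rw [← abs_of_nonneg (by linarith : (0:ℝ) ≤ Real.sqrt (1-a) + Real.sqrt (1-b)), ← abs_mul, key,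
      abs_sub_comm]
  calc |Real.sqrt (1-a) - Real.sqrt (1-b)| * (2 * Real.sqrt m)
      ≤ |Real.sqrt (1-a) - Real.sqrt (1-b)| * (Real.sqrt (1-a) + Real.sqrt (1-b)) := by
        apply mul_le_mul_of_nonneg_left (by linarith) (abs_nonneg _)
    _ = |a - b| := habs

lemma phi_lipschitz (hn : 2 ≤ n) (i : Fin n) {ε : ℝ} (hε : |ε| = 1) :
    LipschitzOnWith ((n:ℝ≥0)^2) (Phi i ε)
      {y : {j : Fin n // j ≠ i} → ℝ | sqsum i y ≤ 1 - 1/n} := by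
  have hn2 : (2:ℝ) ≤ n := by exact_mod_cast hn
  have hn0 : (0:ℝ) < n := by linarith
  rw [lipschitzOnWith_iff_dist_le_mul]
  intro y hy y' hy'
  simp only [mem_setOf_eq] at hy hy'
  set D := dist y y' with hD
  have hDnn : 0 ≤ D := dist_nonneg
  have hinv : (0:ℝ) < 1/n := by positivity
  have hy1 : sqsum i y ≤ 1 := by linarith
  have hy'1 : sqsum i y' ≤ 1 := by linarith
  have hsn : 0 < Real.sqrt n := Real.sqrt_pos.2 hn0
  -- bound on g difference
  have hg : |Real.sqrt (1 - sqsum i y) - Real.sqrt (1 - sqsum i y')|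
      ≤ Real.sqrt n * n * D := by
    have h1 := sqrt_diff_le (a := sqsum i y) (b := sqsum i y') hinv (by linarith) (by linarith)
    have h2 := sqsum_diff_le (i := i) hy1 hy'1
    have hs : Real.sqrt (1/n) = 1 / Real.sqrt n := by
      rw [one_div, one_div, Real.sqrt_inv]
    calc |Real.sqrt (1 - sqsum i y) - Real.sqrt (1 - sqsum i y')|
        ≤ |sqsum i y - sqsum i y'| / (2 * Real.sqrt (1/n)) := h1
      _ ≤ (2 * n * D) / (2 * Real.sqrt (1/n)) := by
          apply div_le_div_of_nonneg_right h2 (by positivity)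
      _ = Real.sqrt n * n * D := by
          rw [hs]; rw [div_eq_iff (by positivity)]; field_simp
  -- now the distance bound
  have hcoord : ∀ j : {j : Fin n // j ≠ i}, |y j - y' j| ≤ D := by
    intro j; rw [← Real.dist_eq]; exact dist_le_pi_dist y y' j
  have hdist2 : dist (Phi i ε y) (Phi i ε y') ^ 2 ≤ (n^2 * D)^2 := by
    rw [EuclideanSpace.dist_eq, Real.sq_sqrt (Finset.sum_nonneg fun k _ => sq_nonneg _)]
    have hsplit : ∑ k : Fin n, dist (Phi i ε y k) (Phi i ε y' k) ^ 2
        = dist (Phi i ε y i) (Phi i ε y' i) ^ 2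
          + ∑ j : {j : Fin n // j ≠ i}, dist (Phi i ε y j.1) (Phi i ε y' j.1) ^ 2 := by
      rw [Fintype.sum_eq_add_sum_compl i]
      congr 1
      apply Finset.sum_subtype
      intro k; simp
    rw [hsplit]
    have hterm1 : dist (Phi i ε y i) (Phi i ε y' i) ^ 2 ≤ (Real.sqrt n * n * D)^2 := by
      rw [Real.dist_eq]
      have : Phi i ε y i - Phi i ε y' i
          = ε * (Real.sqrt (1 - sqsum i y) - Real.sqrt (1 - sqsum i y')) := by
        simp [Phi]; ring
      rw [this, abs_mul, hε, one_mul]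
      have h0 : (0:ℝ) ≤ Real.sqrt n * n * D := by positivity
      exact pow_le_pow_left₀ (abs_nonneg _) hg 2
    have hterm2 : ∑ j : {j : Fin n // j ≠ i}, dist (Phi i ε y j.1) (Phi i ε y' j.1) ^ 2
        ≤ n * D^2 := by
      have : ∀ j : {j : Fin n // j ≠ i}, dist (Phi i ε y j.1) (Phi i ε y' j.1) ^ 2 ≤ D^2 := by
        intro j
        rw [Real.dist_eq]
        have hj : Phi i ε y j.1 - Phi i ε y' j.1 = y j - y' j := by
          simp [Phi, j.2]
        rw [hj]
        exact pow_le_pow_left₀ (abs_nonneg _) (hcoord j) 2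
      calc ∑ j : {j : Fin n // j ≠ i}, dist (Phi i ε y j.1) (Phi i ε y' j.1) ^ 2
          ≤ ∑ _j : {j : Fin n // j ≠ i}, D^2 := Finset.sum_le_sum fun j _ => this j
        _ ≤ n * D^2 := by
            rw [Finset.sum_const, nsmul_eq_mul, Finset.card_univ]
            have : (Fintype.card {j : Fin n // j ≠ i} : ℝ) ≤ n := by
              have h := Fintype.card_subtype_le (fun j : Fin n => j ≠ i)
              simp only [Fintype.card_fin] at h
              exact_mod_cast h
            nlinarith [sq_nonneg D]
    have hsq : (Real.sqrt n * n * D)^2 = n^3 * D^2 := by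
      have h : Real.sqrt n ^ 2 = n := Real.sq_sqrt hn0.le
      rw [mul_pow, mul_pow, h]; ring
    have hn1 : (1:ℝ) ≤ n := by linarith
    calc dist (Phi i ε y i) (Phi i ε y' i) ^ 2
          + ∑ j : {j : Fin n // j ≠ i}, dist (Phi i ε y j.1) (Phi i ε y' j.1) ^ 2
        ≤ n^3 * D^2 + n * D^2 := by rw [← hsq]; exact add_le_add hterm1 hterm2
      _ ≤ (n^2 * D)^2 := by
          have hA : (n:ℝ)^3 * 2 ≤ (n:ℝ)^3 * n := by
            apply mul_le_mul_of_nonneg_left hn2 (by positivity)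
          have hB : (n:ℝ) * 1 ≤ (n:ℝ) * (n:ℝ)^2 := by
            apply mul_le_mul_of_nonneg_left (by nlinarith) hn0.le
          have hpoly : (0:ℝ) ≤ ((n:ℝ)^4 - (n:ℝ)^3 - n) := by nlinarith
          nlinarith [mul_nonneg hpoly (sq_nonneg D)]
  have hfin : dist (Phi i ε y) (Phi i ε y') ≤ n^2 * D := by
    have h0 : (0:ℝ) ≤ n^2 * D := by positivity
    nlinarith [dist_nonneg (x := Phi i ε y) (y := Phi i ε y')]
  calc dist (Phi i ε y) (Phi i ε y') ≤ n^2 * D := hfin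
    _ = ((n:ℝ≥0)^2 : ℝ≥0) * D := by push_cast; ring
lemma sum_sq_eq (ω : En n) (hω : ω ∈ sphere (0:En n) 1) : ∑ k, (ω k)^2 = 1 := by
  have h : ‖ω‖ = 1 := by simpa using hω
  rw [EuclideanSpace.norm_eq] at h
  have := Real.sqrt_eq_one.1 (by simpa using h)
  simpa [sq_abs] using this

lemma exists_piece (hn : 2 ≤ n) (ω : En n) (hω : ω ∈ sphere (0:En n) 1) :
    ∃ i : Fin n, ∃ ε : ℝ, |ε| = 1 ∧ Real.sqrt (1/n) ≤ ε * ω i := by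
  have hn0 : (0:ℝ) < n := by exact_mod_cast Nat.cast_pos.2 (by omega)
  have hsum := sum_sq_eq ω hω
  have hex : ∃ k, 1/(n:ℝ) ≤ (ω k)^2 := by
    by_contra hcon
    push_neg at hcon
    have : ∑ k, (ω k)^2 < ∑ _k : Fin n, 1/(n:ℝ) := by
      apply Finset.sum_lt_sum_of_nonempty
      · have : 0 < n := by omega
        exact ⟨⟨0, this⟩, Finset.mem_univ _⟩
      · intro k _; exact hcon k
    rw [hsum, Finset.sum_const, nsmul_eq_mul, Finset.card_univ, Fintype.card_fin] at this
    rw [mul_one_div, div_self (ne_of_gt hn0)] at this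
    exact lt_irrefl _ this
  obtain ⟨k, hk⟩ := hex
  refine ⟨k, if 0 ≤ ω k then 1 else -1, ?_, ?_⟩
  · split <;> simp
  · have h1 : Real.sqrt (1/n) ≤ |ω k| := by
      rw [← Real.sqrt_sq_eq_abs]
      exact Real.sqrt_le_sqrt hk
    by_cases h : 0 ≤ ω k
    · rw [if_pos h, one_mul]
      rwa [abs_of_nonneg h] at h1
    · rw [if_neg h, neg_one_mul]
      push_neg at h
      rwa [abs_of_neg h] at h1

lemma coord_dist_le (a b : En n) (k : Fin n) : |a k - b k| ≤ dist a b := by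
  rw [EuclideanSpace.dist_eq, ← Real.sqrt_sq_eq_abs]
  apply Real.sqrt_le_sqrt
  have : (a k - b k)^2 = dist (a k) (b k) ^ 2 := by rw [Real.dist_eq, sq_abs]
  rw [this]
  exact Finset.single_le_sum (f := fun j => dist (a j) (b j)^2) (fun j _ => sq_nonneg _)
    (Finset.mem_univ k)

lemma cover (hn : 2 ≤ n) (x : En n) (t : ℝ) :
    sphere (0:En n) 1 ∩ closedBall x t ⊆
      ⋃ p : Fin n × Bool, (Phi p.1 (if p.2 then 1 else -1)) ''
        ({y : {j : Fin n // j ≠ p.1} → ℝ | sqsum p.1 y ≤ 1 - 1/n}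
          ∩ closedBall (fun j => x j.1) t) := by
  rintro ω ⟨hω, hωb⟩
  have hn0 : (0:ℝ) < n := by exact_mod_cast Nat.cast_pos.2 (by omega)
  obtain ⟨i, ε, hε, hεω⟩ := exists_piece hn ω hω
  have hsqrtpos : 0 < Real.sqrt (1/n) := Real.sqrt_pos.2 (by positivity)
  have hωipos : 0 < ε * ω i := lt_of_lt_of_le hsqrtpos hεω
  have hne : ε = 1 ∨ ε = -1 := abs_eq (by norm_num : (0:ℝ) ≤ 1) |>.1 hε
  set y : {j : Fin n // j ≠ i} → ℝ := fun j => ω j.1 with hy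
  have hsq2 : ε^2 = 1 := by rcases hne with h|h <;> rw [h] <;> norm_num
  have habs : |ω i| = ε * ω i := by
    have : |ε * ω i| = ε * ω i := abs_of_pos hωipos
    rwa [abs_mul, hε, one_mul] at this
  have hsqsum : sqsum i y = 1 - (ω i)^2 := by
    have hsplit : ∑ k : Fin n, (ω k)^2 = (ω i)^2 + ∑ j : {j : Fin n // j ≠ i}, (ω j.1)^2 := by
      rw [Fintype.sum_eq_add_sum_compl i]
      congr 1
      apply Finset.sum_subtype
      intro k; simp
    have := sum_sq_eq ω hω
    rw [hsplit] at this
    simp only [sqsum, hy]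
    linarith
  have hωi2 : 1/(n:ℝ) ≤ (ω i)^2 := by
    have h1 : Real.sqrt (1/n) ≤ |ω i| := hεω.trans_eq habs.symm
    have := Real.sqrt_le_sqrt (le_of_eq (rfl : (1:ℝ)/n = 1/n)) -- dummy
    calc 1/(n:ℝ) = Real.sqrt (1/n)^2 := (Real.sq_sqrt (by positivity)).symm
      _ ≤ |ω i|^2 := by apply pow_le_pow_left₀ hsqrtpos.le h1
      _ = (ω i)^2 := sq_abs _
  have hmem1 : y ∈ {y : {j : Fin n // j ≠ i} → ℝ | sqsum i y ≤ 1 - 1/n} := by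
    rw [mem_setOf_eq, hsqsum]; linarith
  have htnn : 0 ≤ t := le_trans dist_nonneg (mem_closedBall.1 hωb)
  have hmem2 : y ∈ closedBall (fun j : {j : Fin n // j ≠ i} => x j.1) t := by
    rw [mem_closedBall]
    rw [dist_pi_le_iff htnn]
    intro j
    rw [Real.dist_eq]
    exact (coord_dist_le ω x j.1).trans (mem_closedBall.1 hωb)
  have hphi : Phi i ε y = ω := by
    ext k
    by_cases h : k = i
    · subst h
      simp only [Phi, PiLp.toLp_apply, dif_pos rfl]
      rw [hsqsum]
      have : (1 : ℝ) - (1 - (ω k)^2) = (ω k)^2 := by ring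
      rw [this, Real.sqrt_sq_eq_abs, habs]
      calc ε * (ε * ω k) = ε^2 * ω k := by ring
        _ = ω k := by rw [hsq2, one_mul]
    · simp only [Phi, PiLp.toLp_apply, dif_neg h]; rfl
  apply mem_iUnion.2
  rcases hne with h|h
  · exact ⟨⟨i, true⟩, ⟨y, ⟨hmem1, hmem2⟩, by simpa [h] using hphi⟩⟩
  · exact ⟨⟨i, false⟩, ⟨y, ⟨hmem1, hmem2⟩, by simpa [h] using hphi⟩⟩
/-- The cap constant. -/
def capC (n : ℕ) : ℝ≥0∞ :=
  (2*n) * ((n:ℝ≥0)^2 : ℝ≥0∞)^((n:ℝ)-1) * ENNReal.ofReal ((2:ℝ)^(n-1))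

lemma capC_ne_top (n : ℕ) (hn : 2 ≤ n) : capC n ≠ ∞ := by
  have hd : (0:ℝ) ≤ (n:ℝ)-1 := by
    have : (1:ℝ) ≤ n := by exact_mod_cast Nat.one_le_of_lt hn
    linarith
  apply ENNReal.mul_ne_top
  · apply ENNReal.mul_ne_top
    · exact ENNReal.mul_ne_top (by simp) (by simp)
    · exact ENNReal.rpow_ne_top_of_nonneg hd ENNReal.coe_ne_top
  · exact ENNReal.ofReal_ne_top

lemma cap_bound (hn : 2 ≤ n) (x : En n) (t : ℝ) (ht : 0 ≤ t) :
    μH[(n:ℝ)-1] (sphere (0:En n) 1 ∩ closedBall x t)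
      ≤ capC n * (ENNReal.ofReal t)^((n:ℝ)-1) := by
  have hn1 : (1:ℝ) ≤ n := by exact_mod_cast Nat.one_le_of_lt hn
  have hd : (0:ℝ) ≤ (n:ℝ)-1 := by linarith
  have hcast : ((n-1 : ℕ) : ℝ) = (n:ℝ) - 1 := by
    rw [Nat.cast_sub (by omega)]; norm_num
  -- bound each piece
  have hpiece : ∀ p : Fin n × Bool,
      μH[(n:ℝ)-1] ((Phi p.1 (if p.2 then 1 else -1)) ''
        ({y : {j : Fin n // j ≠ p.1} → ℝ | sqsum p.1 y ≤ 1 - 1/n}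
          ∩ closedBall (fun j => x j.1) t))
      ≤ ((n:ℝ≥0)^2 : ℝ≥0∞)^((n:ℝ)-1) * ENNReal.ofReal ((2*t)^(n-1)) := by
    intro p
    have hε : |(if p.2 then (1:ℝ) else -1)| = 1 := by split <;> norm_num
    have hlip := (phi_lipschitz hn p.1 hε).mono
      (inter_subset_left (t := closedBall (fun j : {j : Fin n // j ≠ p.1} => x j.1) t))
    have h1 := hlip.hausdorffMeasure_image_le hd
    refine h1.trans ?_
    apply mul_le_mul_right ?_
    -- Hausdorff measure in the pi domain is at most volume of closed ball
    have hcard : Fintype.card {j : Fin n // j ≠ p.1} = n - 1 := by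
      simp [Fintype.card_subtype_compl]
    have hmeas : μH[(n:ℝ)-1]
        ({y : {j : Fin n // j ≠ p.1} → ℝ | sqsum p.1 y ≤ 1 - 1/n}
          ∩ closedBall (fun j => x j.1) t)
        ≤ μH[(n:ℝ)-1] (closedBall (fun j : {j : Fin n // j ≠ p.1} => x j.1) t) :=
      measure_mono inter_subset_right
    refine hmeas.trans ?_
    have hdim : (n:ℝ) - 1 = ((Fintype.card {j : Fin n // j ≠ p.1} : ℕ) : ℝ) := by
      rw [hcard, hcast]
    rw [hdim, hausdorffMeasure_pi_real]
    rw [Real.volume_pi_closedBall _ ht, hcard]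
  calc μH[(n:ℝ)-1] (sphere (0:En n) 1 ∩ closedBall x t)
      ≤ μH[(n:ℝ)-1] (⋃ p : Fin n × Bool, (Phi p.1 (if p.2 then 1 else -1)) ''
          ({y : {j : Fin n // j ≠ p.1} → ℝ | sqsum p.1 y ≤ 1 - 1/n}
            ∩ closedBall (fun j => x j.1) t)) := measure_mono (cover hn x t)
    _ ≤ ∑ p : Fin n × Bool, μH[(n:ℝ)-1] ((Phi p.1 (if p.2 then 1 else -1)) ''
          ({y : {j : Fin n // j ≠ p.1} → ℝ | sqsum p.1 y ≤ 1 - 1/n}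
            ∩ closedBall (fun j => x j.1) t)) := measure_iUnion_fintype_le _ _
    _ ≤ ∑ _p : Fin n × Bool, ((n:ℝ≥0)^2 : ℝ≥0∞)^((n:ℝ)-1) * ENNReal.ofReal ((2*t)^(n-1)) :=
          Finset.sum_le_sum fun p _ => hpiece p
    _ = (2*n) * (((n:ℝ≥0)^2 : ℝ≥0∞)^((n:ℝ)-1) * ENNReal.ofReal ((2*t)^(n-1))) := by
          rw [Finset.sum_const, Finset.card_univ]
          simp only [Fintype.card_prod, Fintype.card_fin, Fintype.card_bool, nsmul_eq_mul]
          push_cast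
          ring
    _ = capC n * (ENNReal.ofReal t)^((n:ℝ)-1) := by
          rw [capC]
          rw [mul_pow, ENNReal.ofReal_mul (by positivity), ENNReal.ofReal_pow ht]
          rw [← ENNReal.rpow_natCast (ENNReal.ofReal t), hcast]
          ring
lemma rpow_neg_antitone {a c : ℝ≥0∞} (h : a ≤ c) {e : ℝ} (he : 0 ≤ e) : c^(-e) ≤ a^(-e) := by
  rw [ENNReal.rpow_neg, ENNReal.rpow_neg]
  exact ENNReal.inv_le_inv.2 (ENNReal.rpow_le_rpow h he)

lemma unit_integral_bound (hn : 2 ≤ n) (lam : ℝ) (hlam0 : 0 < lam)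
    (hlam1 : lam ≤ ((n:ℝ)-1)/2) :
    ∃ C : ℝ≥0∞, C ≠ ∞ ∧ ∀ x : En n,
      ∫⁻ ω in sphere (0:En n) 1,
        (ENNReal.ofReal ‖x - ω‖) ^ (-(((n:ℝ)-1) - 2*lam)) ∂μH[(n:ℝ)-1] ≤ C := by
  set d : ℝ := (n:ℝ)-1 with hdd
  have hn1 : (1:ℝ) ≤ n := by exact_mod_cast Nat.one_le_of_lt hn
  have hd0 : 0 < d := by simp only [hdd]; linarith [(by exact_mod_cast hn : (2:ℝ) ≤ n)]
  set e : ℝ := d - 2*lam with hee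
  have he0 : 0 ≤ e := by simp only [hee]; linarith
  have hed : d - e = 2*lam := by simp only [hee]; ring
  set B : ℝ≥0∞ := 2⁻¹ with hBB
  have hB0 : B ≠ 0 := by simp [hBB]
  have hBtop : B ≠ ∞ := by simp [hBB]
  have hB1 : B < 1 := by
    rw [hBB]
    norm_num
  set r : ℝ≥0∞ := B ^ (2*lam) with hrr
  have hr1 : r < 1 := ENNReal.rpow_lt_one hB1 (by linarith)
  have hBk : ∀ k : ℕ, ENNReal.ofReal ((2⁻¹:ℝ)^k) = B^k := by
    intro k
    rw [ENNReal.ofReal_pow (by norm_num), hBB, ENNReal.ofReal_inv_of_pos (by norm_num)]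
    norm_num
  set C : ℝ≥0∞ := capC n + capC n * B^(-e) * (1-r)⁻¹ with hCC
  have hBe : B^(-e) ≠ ∞ := by
    rw [ENNReal.rpow_neg]
    apply ENNReal.inv_ne_top.2
    exact (ENNReal.rpow_pos (by simp [hBB]) hBtop).ne'
  refine ⟨C, ?_, ?_⟩
  · rw [hCC]
    apply ENNReal.add_ne_top.2
    constructor
    · exact capC_ne_top n hn
    · apply ENNReal.mul_ne_top
      · exact ENNReal.mul_ne_top (capC_ne_top n hn) hBe
      · have h1r : (1:ℝ≥0∞) - r ≠ 0 := by rw [Ne, tsub_eq_zero_iff_le]; exact hr1.not_ge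
        exact ENNReal.inv_ne_top.2 h1r
  intro x
  haveI : NullSingletonClass (μH[d] : Measure (En n)) := Measure.noAtoms_hausdorff (En n) hd0
  have hmf : Measurable (fun ω : En n => ‖x - ω‖) :=
    (measurable_const.sub measurable_id).norm
  set f : En n → ℝ≥0∞ := fun ω => (ENNReal.ofReal ‖x - ω‖) ^ (-e) with hff
  set F : Set (En n) := sphere (0:En n) 1 ∩ {ω : En n | 1 < ‖x - ω‖} with hFF
  set T : ℕ → Set (En n) := fun j =>
    sphere (0:En n) 1 ∩ {ω : En n | (2⁻¹:ℝ)^(j+1) < ‖x - ω‖ ∧ ‖x - ω‖ ≤ (2⁻¹:ℝ)^j} with hTT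
  have hsphere_meas : μH[d] (sphere (0:En n) 1) ≤ capC n := by
    have h1 : sphere (0:En n) 1 = sphere (0:En n) 1 ∩ closedBall (0:En n) 1 := by
      rw [Set.inter_eq_self_of_subset_left sphere_subset_closedBall]
    rw [h1]
    have := cap_bound hn (0:En n) 1 (by norm_num)
    simpa using this
  -- step 1 : remove the singularity
  have hae : (sphere (0:En n) 1 : Set (En n)) =ᵐ[μH[d]] ((sphere (0:En n) 1 : Set (En n)) \ ({x} : Set (En n))) := by
    symm
    refine sdiff_ae_eq_self.mpr ?_
    exact measure_mono_null Set.inter_subset_right (measure_singleton x)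
  rw [setLIntegral_congr hae]
  -- step 2 : covering
  have hcover : (sphere (0:En n) 1 : Set (En n)) \ ({x} : Set (En n)) ⊆ F ∪ ⋃ j, T j := by
    rintro ω ⟨hω, hωx⟩
    have hpos : 0 < ‖x - ω‖ := by
      rw [norm_pos_iff, sub_ne_zero]
      exact fun h => hωx (by simp [h.symm])
    by_cases h1 : 1 < ‖x - ω‖
    · exact Or.inl ⟨hω, h1⟩
    push_neg at h1
    right
    have hex : ∃ m : ℕ, (2⁻¹:ℝ)^m < ‖x - ω‖ := by
      obtain ⟨m, hm⟩ := exists_pow_lt_of_lt_one hpos (by norm_num : (2⁻¹:ℝ) < 1)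
      exact ⟨m, hm⟩
    set m := Nat.find hex with hmm
    have hm : (2⁻¹:ℝ)^m < ‖x - ω‖ := Nat.find_spec hex
    have hm0 : m ≠ 0 := by
      intro h0
      rw [h0, pow_zero] at hm
      exact absurd hm (not_lt.2 h1)
    obtain ⟨j, hj⟩ : ∃ j, m = j + 1 := ⟨m - 1, by omega⟩
    apply Set.mem_iUnion.2 ⟨j, ?_⟩
    refine ⟨hω, ?_, ?_⟩
    · rw [← hj]; exact hm
    · have := Nat.find_min hex (by omega : j < m)
      push_neg at this
      exact this
  refine le_trans (lintegral_mono_set hcover) ?_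
  refine le_trans (lintegral_union_le _ _ _) ?_
  rw [hCC]
  apply add_le_add
  -- far part
  · have hFm : MeasurableSet F := by
      apply (Metric.isClosed_sphere).measurableSet.inter
      exact measurableSet_lt measurable_const hmf
    calc ∫⁻ ω in F, f ω ∂μH[d] ≤ ∫⁻ _ω in F, 1 ∂μH[d] := by
          apply setLIntegral_mono' hFm
          intro ω hω
          rw [hff]
          simp only
          rw [ENNReal.rpow_neg]
          apply ENNReal.inv_le_one.2
          have h1 : (1:ℝ≥0∞) ≤ ENNReal.ofReal ‖x - ω‖ := by
            rw [show (1:ℝ≥0∞) = ENNReal.ofReal 1 by simp]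
            exact ENNReal.ofReal_le_ofReal hω.2.le
          rcases he0.lt_or_eq with h|h
          · exact ENNReal.one_le_rpow h1 h
          · rw [← h, ENNReal.rpow_zero]
      _ = μH[d] F := by rw [setLIntegral_const, one_mul]
      _ ≤ capC n := le_trans (measure_mono Set.inter_subset_left) hsphere_meas
  -- dyadic part
  · refine le_trans (lintegral_iUnion_le _ _) ?_
    have hterm : ∀ j : ℕ, ∫⁻ ω in T j, f ω ∂μH[d] ≤ (capC n * B^(-e)) * r^j := by
      intro j
      have hTm : MeasurableSet (T j) := by
        apply (Metric.isClosed_sphere).measurableSet.inter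
        apply MeasurableSet.inter
        · exact measurableSet_lt measurable_const hmf
        · exact measurableSet_le hmf measurable_const
      have hbound : ∀ ω ∈ T j, f ω ≤ (B^(j+1) : ℝ≥0∞)^(-e) := by
        intro ω hω
        rw [hff]
        simp only
        apply rpow_neg_antitone ?_ he0
        rw [← hBk (j+1)]
        exact ENNReal.ofReal_le_ofReal hω.2.1.le
      calc ∫⁻ ω in T j, f ω ∂μH[d] ≤ ∫⁻ _ω in T j, (B^(j+1) : ℝ≥0∞)^(-e) ∂μH[d] :=
            setLIntegral_mono' hTm hbound
        _ = (B^(j+1) : ℝ≥0∞)^(-e) * μH[d] (T j) := setLIntegral_const _ _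
        _ ≤ (B^(j+1) : ℝ≥0∞)^(-e) * (capC n * (B^j)^d) := by
            apply mul_le_mul_right
            have hsub : T j ⊆ sphere (0:En n) 1 ∩ closedBall x ((2⁻¹:ℝ)^j) := by
              rintro ω ⟨hω, _, h2⟩
              refine ⟨hω, ?_⟩
              rw [mem_closedBall, dist_comm, dist_eq_norm]
              exact h2
            refine le_trans (measure_mono hsub) ?_
            have := cap_bound hn x ((2⁻¹:ℝ)^j) (by positivity)
            rw [hBk j] at this
            rw [← ENNReal.rpow_natCast B j, ← ENNReal.rpow_mul]
            rw [← ENNReal.rpow_natCast B j, ← ENNReal.rpow_mul] at this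
            exact this
        _ = (capC n * B^(-e)) * r^j := by
            rw [hrr, ← ENNReal.rpow_natCast B (j+1), ← ENNReal.rpow_mul,
              ← ENNReal.rpow_natCast B j, ← ENNReal.rpow_mul,
              ← ENNReal.rpow_natCast (B ^ (2*lam)) j, ← ENNReal.rpow_mul]
            have h1 : B ^ (((j+1:ℕ):ℝ) * -e) * (capC n * B ^ (((j:ℕ):ℝ) * d))
                = capC n * (B ^ (((j+1:ℕ):ℝ) * -e) * B ^ (((j:ℕ):ℝ) * d)) := by ring
            rw [h1, ← ENNReal.rpow_add _ _ hB0 hBtop]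
            have h2 : capC n * B ^ (-e) * B ^ (2*lam * ((j:ℕ):ℝ))
                = capC n * (B ^ (-e) * B ^ (2*lam*((j:ℕ):ℝ))) := by ring
            rw [h2, ← ENNReal.rpow_add _ _ hB0 hBtop]
            congr 2
            push_cast
            rw [← hed]
            ring
    calc ∑' j, ∫⁻ ω in T j, f ω ∂μH[d] ≤ ∑' j, (capC n * B^(-e)) * r^j :=
          ENNReal.tsum_le_tsum hterm
      _ = (capC n * B^(-e)) * ∑' j, r^j := ENNReal.tsum_mul_left
      _ = capC n * B^(-e) * (1-r)⁻¹ := by rw [ENNReal.tsum_geometric]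
lemma restrict_sphere_eq_map (z : En n) {ρ : ℝ} (hρ : 0 < ρ) {d : ℝ} (hd : 0 ≤ d) :
    (μH[d] : Measure (En n)).restrict (sphere z ρ)
      = Measure.map (fun ω : En n => z + ρ • ω)
          (ENNReal.ofReal (ρ^d) • (μH[d] : Measure (En n)).restrict (sphere (0:En n) 1)) := by
  have hT : Measurable (fun ω : En n => z + ρ • ω) :=
    (measurable_const.add (measurable_id.const_smul ρ))
  symm
  apply Measure.ext
  intro s hs
  rw [Measure.map_apply hT hs, Measure.smul_apply, smul_eq_mul,
    Measure.restrict_apply (hT hs), Measure.restrict_apply hs]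
  set A : Set (En n) := (fun ω : En n => z + ρ • ω) ⁻¹' s ∩ sphere (0:En n) 1 with hA
  have hset : (fun w : En n => z + w) '' (ρ • A) = s ∩ sphere z ρ := by
    ext w
    constructor
    · rintro ⟨v, ⟨a, ⟨has, ha1⟩, rfl⟩, rfl⟩
      refine ⟨has, ?_⟩
      have h1 : ‖a‖ = 1 := by simpa using ha1
      simp only [mem_sphere_iff_norm]
      rw [add_sub_cancel_left, norm_smul, h1, Real.norm_eq_abs, abs_of_pos hρ, mul_one]
    · rintro ⟨hws, hw⟩
      refine ⟨ρ • (ρ⁻¹ • (w - z)), ⟨ρ⁻¹ • (w - z), ⟨?_, ?_⟩, rfl⟩, ?_⟩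
      · simp only [Set.mem_preimage, smul_inv_smul₀ (ne_of_gt hρ)]
        simpa using hws
      · simp only [mem_sphere_iff_norm, sub_zero, norm_smul, Real.norm_eq_abs,
          abs_of_pos (inv_pos.2 hρ)]
        rw [mem_sphere_iff_norm] at hw
        rw [hw]
        field_simp
      · rw [smul_inv_smul₀ (ne_of_gt hρ)]
        show z + (w - z) = w
        exact add_sub_cancel z w
  calc ENNReal.ofReal (ρ^d) * μH[d] A
      = μH[d] (ρ • A) := by
        rw [Measure.hausdorffMeasure_smul₀ hd (ne_of_gt hρ) A, ENNReal.smul_def, smul_eq_mul]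
        congr 1
        have h1 : ‖ρ‖₊ = ρ.toNNReal := by
          ext
          simp [Real.coe_toNNReal _ hρ.le, Real.norm_of_nonneg hρ.le]
        rw [ENNReal.coe_rpow_of_nonneg _ hd, h1]
        rw [show ((ρ.toNNReal : ℝ≥0∞)) = ENNReal.ofReal ρ from rfl]
        rw [ENNReal.ofReal_rpow_of_pos hρ]
    _ = μH[d] ((fun w : En n => z + w) '' (ρ • A)) := by
        rw [Isometry.hausdorffMeasure_image ?_ (Or.inl hd)]
        apply Isometry.of_dist_eq
        intro a b
        simp [dist_add_left]
    _ = μH[d] (s ∩ sphere z ρ) := by rw [hset]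

theorem sphere_singular_integral_bound' (hn : 2 ≤ n) (lam : ℝ) (hlam0 : 0 < lam)
    (hlam1 : lam ≤ ((n : ℝ) - 1) / 2) :
    ∃ C : ℝ, 0 < C ∧ ∀ (z x : En n) (ρ : ℝ), 0 < ρ →
      (∫⁻ y in Metric.sphere z ρ,
          (ENNReal.ofReal ‖x - y‖) ^ (-(((n : ℝ) - 1) - 2 * lam)) ∂μH[(n : ℝ) - 1])
        ≤ ENNReal.ofReal (C * ρ ^ (2 * lam)) := by
  obtain ⟨C₀, hC₀top, hC₀⟩ := unit_integral_bound hn lam hlam0 hlam1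
  set d : ℝ := (n:ℝ) - 1 with hdd
  set e : ℝ := d - 2*lam with hee
  have hn1 : (1:ℝ) ≤ n := by exact_mod_cast Nat.one_le_of_lt hn
  have hd0 : 0 ≤ d := by simp only [hdd]; linarith
  refine ⟨C₀.toReal + 1, by positivity, ?_⟩
  intro z x ρ hρ
  have hT : Measurable (fun ω : En n => z + ρ • ω) :=
    (measurable_const.add (measurable_id.const_smul ρ))
  have hg : Measurable (fun y : En n => (ENNReal.ofReal ‖x - y‖) ^ (-e)) := by
    apply (ENNReal.continuous_rpow_const.measurable).comp
    exact ((measurable_const.sub measurable_id).norm).ennreal_ofReal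
  rw [show ∫⁻ y in Metric.sphere z ρ,
        (ENNReal.ofReal ‖x - y‖) ^ (-(((n : ℝ) - 1) - 2 * lam)) ∂μH[(n : ℝ) - 1]
      = ∫⁻ y in Metric.sphere z ρ, (ENNReal.ofReal ‖x - y‖) ^ (-e) ∂μH[d] from rfl]
  rw [restrict_sphere_eq_map z hρ hd0, lintegral_map hg hT, lintegral_smul_measure]
  set x' : En n := ρ⁻¹ • (x - z) with hx'
  have hsub : ∀ ω : En n, x - (z + ρ • ω) = ρ • (x' - ω) := by
    intro ω
    rw [hx', smul_sub, smul_inv_smul₀ (ne_of_gt hρ)]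
    abel
  have hnorm : ∀ ω : En n, ‖x - (z + ρ • ω)‖ = ρ * ‖x' - ω‖ := by
    intro ω
    rw [hsub ω, norm_smul, Real.norm_eq_abs, abs_of_pos hρ]
  have hint : ∫⁻ ω in sphere (0:En n) 1,
      (ENNReal.ofReal ‖x - (z + ρ • ω)‖) ^ (-e) ∂μH[d]
      = (ENNReal.ofReal ρ)^(-e) * ∫⁻ ω in sphere (0:En n) 1,
          (ENNReal.ofReal ‖x' - ω‖) ^ (-e) ∂μH[d] := by
    rw [← lintegral_const_mul' _ _ (by
      rw [ENNReal.rpow_neg]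
      exact ENNReal.inv_ne_top.2
        (ENNReal.rpow_pos (ENNReal.ofReal_pos.2 hρ) ENNReal.ofReal_ne_top).ne')]
    apply lintegral_congr
    intro ω
    rw [hnorm ω, ENNReal.ofReal_mul hρ.le,
      ENNReal.mul_rpow_of_ne_top ENNReal.ofReal_ne_top ENNReal.ofReal_ne_top]
  rw [hint]
  calc ENNReal.ofReal (ρ^d) * ((ENNReal.ofReal ρ)^(-e) * ∫⁻ ω in sphere (0:En n) 1,
          (ENNReal.ofReal ‖x' - ω‖) ^ (-e) ∂μH[d])
      ≤ ENNReal.ofReal (ρ^d) * ((ENNReal.ofReal ρ)^(-e) * C₀) := by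
        apply mul_le_mul_right
        apply mul_le_mul_right
        exact hC₀ x'
    _ = ENNReal.ofReal (ρ^(2*lam)) * C₀ := by
        rw [ENNReal.ofReal_rpow_of_pos hρ, ← mul_assoc,
          ← ENNReal.ofReal_mul (Real.rpow_nonneg hρ.le d), ← Real.rpow_add hρ]
        congr 2
        simp only [hee, hdd]
        ring
    _ ≤ ENNReal.ofReal (ρ^(2*lam)) * ENNReal.ofReal (C₀.toReal + 1) := by
        apply mul_le_mul_right
        calc C₀ = ENNReal.ofReal C₀.toReal := (ENNReal.ofReal_toReal hC₀top).symm
          _ ≤ ENNReal.ofReal (C₀.toReal + 1) := ENNReal.ofReal_le_ofReal (by linarith)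
    _ = ENNReal.ofReal ((C₀.toReal + 1) * ρ ^ (2 * lam)) := by
        rw [← ENNReal.ofReal_mul (Real.rpow_nonneg hρ.le _)]
        congr 1
        ring

end SphereAux

/-- For `n ≥ 2` and `0 < λ ≤ (n-1)/2` there is `C_λ > 0` such that for every sphere
`S(z,ρ)` and every `x ∈ ℝⁿ`,
`∫_{S(z,ρ)} |x-y|^{-((n-1)-2λ)} dσ(y) ≤ C_λ ρ^{2λ}`, the integral being taken in the
extended (possibly infinite) sense. -/
theorem sphere_singular_integral_bound (n : ℕ) (hn : 2 ≤ n) (lam : ℝ) (hlam0 : 0 < lam)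
    (hlam1 : lam ≤ ((n : ℝ) - 1) / 2) :
    ∃ C : ℝ, 0 < C ∧ ∀ (z x : En n) (ρ : ℝ), 0 < ρ →
      (∫⁻ y in Metric.sphere z ρ,
          (ENNReal.ofReal ‖x - y‖) ^ (-(((n : ℝ) - 1) - 2 * lam)) ∂μH[(n : ℝ) - 1])
        ≤ ENNReal.ofReal (C * ρ ^ (2 * lam)) := by
  exact sphere_singular_integral_bound' hn lam hlam0 hlam1

end
end

section
/- Let n ≥ 2, θ ∈ S^{n−1}, 0 < δ < 1, and let q be a Schwartz function on ℝⁿ. For every η ∈ H_θ, η ≠ 0, the map r ↦ S_{θ,r}(q)(η) is differentiable on (0,∞), and there exists a constant C > 0 depending only on n and δ such that for all r ∈ (1−δ, 1+δ): | (d/dr) S_{θ,r}(q)(η) | ≤ C ( K_r(𝓕q, 𝓕q)(η) + k · K_r(|∇𝓕q|, 𝓕q)(η) + k · K_r(𝓕q, |∇𝓕q|)(η) ), where |∇𝓕q| denotes the Euclidean norm of the gradient of 𝓕q and k = k(η,θ). -/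
open MeasureTheory Real Filter Set Metric
open scoped FourierTransform RealInnerProductSpace SchwartzMap ENNReal

noncomputable section

/-- Euclidean norm of the gradient of a (complex-valued) function on `ℝⁿ`. -/
def gradNorm {n : ℕ} (g : En n → ℂ) (ξ : En n) : ℝ :=
  Real.sqrt (∑ i : Fin n, ‖fderiv ℝ g ξ (EuclideanSpace.single i 1)‖ ^ 2)


/-! ### Auxiliary lemmas -/

open scoped NNReal Pointwise

lemma sqrt_diff_le' {c a b : ℝ} (hc : 0 < c) (hc1 : c ≤ 1) (ha0 : c ≤ a) (hb0 : c ≤ b) :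
    |Real.sqrt a - Real.sqrt b| ≤ 1/(2*c) * |a - b| := by
  set s := Real.sqrt a with hs'
  set t := Real.sqrt b with ht'
  have hs : s^2 = a := Real.sq_sqrt (le_trans hc.le ha0)
  have ht : t^2 = b := Real.sq_sqrt (le_trans hc.le hb0)
  have hs1 : c ≤ s := by
    rw [hs', show c = Real.sqrt (c^2) from (Real.sqrt_sq hc.le).symm]
    exact Real.sqrt_le_sqrt (by nlinarith)
  have ht1 : c ≤ t := by
    rw [ht', show c = Real.sqrt (c^2) from (Real.sqrt_sq hc.le).symm]
    exact Real.sqrt_le_sqrt (by nlinarith)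
  rw [← hs, ← ht, one_div, inv_mul_eq_div, le_div_iff₀ (by positivity : (0:ℝ) < 2*c)]
  rcases abs_cases (s - t) with ⟨h1, h2⟩ | ⟨h1, h2⟩ <;>
    rcases abs_cases (s^2 - t^2) with ⟨h3, h4⟩ | ⟨h3, h4⟩ <;> rw [h1, h3] <;> nlinarith

/-- Graph map for one cap of the sphere. -/
def capMap {m : ℕ} (i : Fin (m+1)) (ε : ℝ) (y : Fin m → ℝ) : En (m+1) :=
  (WithLp.equiv 2 _).symm (i.insertNth (ε * Real.sqrt (1 - ∑ j, (y j)^2)) y)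

def capDom (m : ℕ) : Set (Fin m → ℝ) :=
  {y | (∀ j, |y j| ≤ 1) ∧ ∑ j, (y j)^2 ≤ 1 - 1/((m:ℝ)+1)}

lemma capMap_apply {m : ℕ} (i : Fin (m+1)) (ε : ℝ) (y : Fin m → ℝ) (j : Fin (m+1)) :
    capMap i ε y j = (i.insertNth (ε * Real.sqrt (1 - ∑ j, (y j)^2)) y : Fin (m+1) → ℝ) j := rfl

lemma capMap_lipschitz {m : ℕ} (i : Fin (m+1)) {ε : ℝ} (hε : |ε| = 1) :
    LipschitzOnWith (((m:ℝ≥0)+1)^2) (capMap i ε) (capDom m) := by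
  rw [lipschitzOnWith_iff_dist_le_mul]
  intro y hy z hz
  have hm1 : (0:ℝ) < (m:ℝ)+1 := by positivity
  set d := dist y z with hd
  have hd0 : 0 ≤ d := dist_nonneg
  have hcoord : ∀ j, |y j - z j| ≤ d := by
    intro j
    simpa [Real.dist_eq] using dist_le_pi_dist y z j
  have hsum : |(1 - ∑ j, (y j)^2) - (1 - ∑ j, (z j)^2)| ≤ 2*m*d := by
    have heq : (1 - ∑ j, (y j)^2) - (1 - ∑ j, (z j)^2) = ∑ j, ((z j)^2 - (y j)^2) := by
      rw [Finset.sum_sub_distrib]; ring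
    rw [heq]
    refine le_trans (Finset.abs_sum_le_sum_abs _ _) ?_
    have hterm : ∀ j ∈ (Finset.univ : Finset (Fin m)), |(z j)^2 - (y j)^2| ≤ 2*d := by
      intro j _
      have h1 := hy.1 j; have h2 := hz.1 j; have h3 := hcoord j
      have e1 : (z j)^2 - (y j)^2 = (z j + y j) * (z j - y j) := by ring
      rw [e1, abs_mul]
      have e2 : |z j + y j| ≤ 2 := by
        calc |z j + y j| ≤ |z j| + |y j| := abs_add_le _ _
          _ ≤ 2 := by linarith
      have e3 : |z j - y j| ≤ d := by rw [abs_sub_comm]; exact h3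
      exact mul_le_mul e2 e3 (abs_nonneg _) (by norm_num)
    calc ∑ j, |(z j)^2 - (y j)^2| ≤ ∑ _j : Fin m, 2*d := Finset.sum_le_sum hterm
      _ = m * (2*d) := by simp [Finset.sum_const, mul_comm]
      _ = 2*m*d := by ring
  have hsqrt : |Real.sqrt (1 - ∑ j, (y j)^2) - Real.sqrt (1 - ∑ j, (z j)^2)|
      ≤ ((m:ℝ)+1) * m * d := by
    have h1 : 1/((m:ℝ)+1) ≤ 1 - ∑ j, (y j)^2 := by
      have := hy.2; linarith
    have h2 : 1/((m:ℝ)+1) ≤ 1 - ∑ j, (z j)^2 := by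
      have := hz.2; linarith
    have hc : (0:ℝ) < 1/((m:ℝ)+1) := by positivity
    have hc1 : 1/((m:ℝ)+1) ≤ 1 := by
      rw [div_le_one hm1]; linarith [Nat.cast_nonneg (α := ℝ) m]
    refine le_trans (sqrt_diff_le' hc hc1 h1 h2) ?_
    have : 1/(2*(1/((m:ℝ)+1))) = ((m:ℝ)+1)/2 := by field_simp
    rw [this]
    calc ((m:ℝ)+1)/2 * |(1 - ∑ j, (y j)^2) - (1 - ∑ j, (z j)^2)|
        ≤ ((m:ℝ)+1)/2 * (2*m*d) := by
          exact mul_le_mul_of_nonneg_left hsum (by positivity)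
      _ = ((m:ℝ)+1) * m * d := by ring
  rw [EuclideanSpace.dist_eq]
  have hsplit : ∑ j : Fin (m+1), dist (capMap i ε y j) (capMap i ε z j) ^ 2
      = dist (ε * Real.sqrt (1 - ∑ j, (y j)^2)) (ε * Real.sqrt (1 - ∑ j, (z j)^2)) ^ 2
        + ∑ j : Fin m, dist (y j) (z j) ^ 2 := by
    rw [Fin.sum_univ_succAbove _ i]
    simp [capMap_apply, Fin.insertNth_apply_same, Fin.insertNth_apply_succAbove]
  rw [hsplit]
  have hb1 : dist (ε * Real.sqrt (1 - ∑ j, (y j)^2)) (ε * Real.sqrt (1 - ∑ j, (z j)^2))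
      ≤ ((m:ℝ)+1) * m * d := by
    rw [Real.dist_eq, ← mul_sub, abs_mul, hε, one_mul]
    exact hsqrt
  have hb2 : ∑ j : Fin m, dist (y j) (z j) ^ 2 ≤ m * d^2 := by
    calc ∑ j : Fin m, dist (y j) (z j) ^ 2 ≤ ∑ _j : Fin m, d^2 := by
          refine Finset.sum_le_sum fun j _ => ?_
          have := hcoord j
          have h0 : dist (y j) (z j) = |y j - z j| := Real.dist_eq _ _
          nlinarith [abs_nonneg (y j - z j)]
      _ = m * d^2 := by simp [mul_comm]
  have key : dist (ε * Real.sqrt (1 - ∑ j, (y j)^2)) (ε * Real.sqrt (1 - ∑ j, (z j)^2)) ^ 2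
      + ∑ j : Fin m, dist (y j) (z j) ^ 2 ≤ (((m:ℝ)+1)^2*d)^2 := by
    have hd1 : dist (ε * Real.sqrt (1 - ∑ j, (y j)^2)) (ε * Real.sqrt (1 - ∑ j, (z j)^2)) ^ 2
        ≤ (((m:ℝ)+1) * m * d)^2 := by
      nlinarith [dist_nonneg (x := ε * Real.sqrt (1 - ∑ j, (y j)^2))
        (y := ε * Real.sqrt (1 - ∑ j, (z j)^2)), hb1]
    nlinarith [hb2, sq_nonneg d, Nat.cast_nonneg (α := ℝ) m]
  calc Real.sqrt (dist (ε * Real.sqrt (1 - ∑ j, (y j)^2)) (ε * Real.sqrt (1 - ∑ j, (z j)^2)) ^ 2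
      + ∑ j : Fin m, dist (y j) (z j) ^ 2) ≤ Real.sqrt ((((m:ℝ)+1)^2*d)^2) :=
        Real.sqrt_le_sqrt key
    _ = ((m:ℝ)+1)^2*d := Real.sqrt_sq (by positivity)
    _ = ((((m:ℝ≥0)+1)^2 : ℝ≥0) : ℝ) * d := by push_cast; ring

lemma sphere_subset_caps {m : ℕ} :
    Metric.sphere (0 : En (m+1)) 1 ⊆
      ⋃ i : Fin (m+1), (capMap i 1 '' capDom m ∪ capMap i (-1) '' capDom m) := by
  intro x hx
  have hx1 : ‖x‖ = 1 := by simpa using mem_sphere_zero_iff_norm.1 hx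
  have hsum : ∑ j, (x j)^2 = 1 := by
    have := EuclideanSpace.norm_eq x
    rw [hx1] at this
    have h2 : (1:ℝ) = Real.sqrt (∑ j, ‖x j‖^2) := this
    have h3 := congrArg (· ^ 2) h2
    simp only [one_pow] at h3
    rw [Real.sq_sqrt (by positivity)] at h3
    simpa [Real.norm_eq_abs, sq_abs] using h3.symm
  have hexists : ∃ i, 1/((m:ℝ)+1) ≤ (x i)^2 := by
    by_contra h
    push_neg at h
    have : ∑ j, (x j)^2 < ∑ _j : Fin (m+1), 1/((m:ℝ)+1) :=
      Finset.sum_lt_sum_of_nonempty (by simp) (fun j _ => h j)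
    rw [Finset.sum_const] at this
    simp only [Finset.card_univ, Fintype.card_fin, nsmul_eq_mul] at this
    rw [hsum] at this
    have hm1 : (0:ℝ) < (m:ℝ)+1 := by positivity
    rw [mul_one_div] at this
    push_cast at this
    rw [div_self hm1.ne'] at this
    exact lt_irrefl _ this
  obtain ⟨i, hi⟩ := hexists
  set y : Fin m → ℝ := fun j => x (i.succAbove j) with hy
  have hsplit : ∑ j, (x j)^2 = (x i)^2 + ∑ j, (y j)^2 := by
    rw [Fin.sum_univ_succAbove (fun j => (x j)^2) i]
  have hysum : ∑ j, (y j)^2 = 1 - (x i)^2 := by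
    rw [hsplit] at hsum; linarith
  have hyD : y ∈ capDom m := by
    constructor
    · intro j
      have h1 : (y j)^2 ≤ ∑ j', (y j')^2 :=
        Finset.single_le_sum (fun j' _ => sq_nonneg (y j')) (Finset.mem_univ j)
      have h2 : (y j)^2 ≤ 1 := by
        rw [hysum] at h1; nlinarith [sq_nonneg (x i)]
      calc |y j| = Real.sqrt ((y j)^2) := (Real.sqrt_sq_eq_abs _).symm
        _ ≤ Real.sqrt 1 := Real.sqrt_le_sqrt h2
        _ = 1 := Real.sqrt_one
    · rw [hysum]; linarith
  have hsq : Real.sqrt (1 - ∑ j, (y j)^2) = |x i| := by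
    rw [hysum]
    simp [Real.sqrt_sq_eq_abs]
  have hmem : ∀ ε : ℝ, ε * |x i| = x i → x ∈ capMap i ε '' capDom m := by
    intro ε hε
    refine ⟨y, hyD, ?_⟩
    have : capMap i ε y = x := by
      apply (EuclideanSpace.equiv (Fin (m+1)) ℝ).injective
      funext j
      show (i.insertNth (ε * Real.sqrt (1 - ∑ j, (y j)^2)) y : Fin (m+1) → ℝ) j = x j
      rw [hsq, hε]
      have : (fun j => x j) = i.insertNth (x i) (i.removeNth fun j => x j) :=
        (Fin.insertNth_self_removeNth i _).symm
      conv_rhs => rw [show x j = (fun j => x j) j from rfl, this]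
      rfl
    exact this
  rcases le_or_gt 0 (x i) with h | h
  · exact Set.mem_iUnion.2 ⟨i, Or.inl (hmem 1 (by rw [one_mul, abs_of_nonneg h]))⟩
  · exact Set.mem_iUnion.2 ⟨i, Or.inr (hmem (-1) (by rw [abs_of_neg h]; ring))⟩

lemma capDom_measure_lt_top (m : ℕ) : μH[(m:ℝ)] (capDom m) < ⊤ := by
  have h1 : μH[(m:ℝ)] = (volume : Measure (Fin m → ℝ)) := by
    rw [← hausdorffMeasure_pi_real (ι := Fin m)]
    congr 1
    simp
  rw [h1]
  have h2 : capDom m ⊆ Metric.closedBall 0 1 := by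
    intro y hy
    rw [Metric.mem_closedBall, dist_pi_le_iff (by norm_num)]
    intro j
    simpa [Real.dist_eq] using hy.1 j
  exact lt_of_le_of_lt (measure_mono h2) (measure_closedBall_lt_top)

lemma cap_measure_lt_top {m : ℕ} (i : Fin (m+1)) {ε : ℝ} (hε : |ε| = 1) :
    μH[(m:ℝ)] (capMap i ε '' capDom m) < ⊤ := by
  refine lt_of_le_of_lt ((capMap_lipschitz i hε).hausdorffMeasure_image_le (by positivity)) ?_
  exact ENNReal.mul_lt_top
    (ENNReal.rpow_lt_top_of_nonneg (by positivity) ENNReal.coe_lt_top.ne)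
    (capDom_measure_lt_top m)

lemma sphere_hausdorff_lt_top {n : ℕ} (hn : 2 ≤ n) :
    μH[(n:ℝ)-1] (Metric.sphere (0 : En n) 1) < ⊤ := by
  obtain ⟨m, rfl⟩ : ∃ m, n = m + 1 := ⟨n - 1, by omega⟩
  have hd : ((m+1:ℕ):ℝ) - 1 = (m:ℝ) := by push_cast; ring
  rw [hd]
  refine lt_of_le_of_lt (measure_mono sphere_subset_caps) ?_
  refine lt_of_le_of_lt (measure_iUnion_le _) ?_
  rw [tsum_fintype]
  refine ENNReal.sum_lt_top.2 fun i _ => ?_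
  refine lt_of_le_of_lt (measure_union_le _ _) ?_
  exact ENNReal.add_lt_top.2 ⟨cap_measure_lt_top i (by norm_num),
    cap_measure_lt_top i (by norm_num)⟩

lemma sphere_map_measure {n : ℕ} {d : ℝ} (hd : 0 ≤ d) (c : En n) {ρ : ℝ} (hρ : 0 < ρ) :
    (μH[d] : Measure (En n)).restrict (Metric.sphere c ρ)
      = (ENNReal.ofReal (ρ ^ d)) •
        Measure.map (fun ω : En n => c + ρ • ω)
          ((μH[d] : Measure (En n)).restrict (Metric.sphere 0 1)) := by
  set T : En n → En n := fun ω => c + ρ • ω with hT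
  have hTc : Continuous T := continuous_const.add (continuous_id.const_smul ρ)
  have himg : ∀ B : Set (En n), μH[d] (T '' B) = ENNReal.ofReal (ρ ^ d) * μH[d] B := by
    intro B
    have h1 : T '' B = (IsometryEquiv.vaddConst c) '' (ρ • B) := by
      rw [← Set.image_smul, Set.image_image]
      exact Set.image_congr' fun b => by
        rw [IsometryEquiv.vaddConst_apply]; exact add_comm _ _
    rw [h1, IsometryEquiv.hausdorffMeasure_image,
      Measure.hausdorffMeasure_smul₀ hd hρ.ne' B]
    congr 1
    rw [Real.toNNReal_rpow_of_nonneg hρ.le, Real.nnnorm_of_nonneg hρ.le,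
      ← NNReal.coe_inj, NNReal.coe_rpow, NNReal.coe_rpow, Real.coe_toNNReal _ hρ.le]
    rfl
  have hsph : T '' Metric.sphere 0 1 = Metric.sphere c ρ := by
    ext x
    simp only [Set.mem_image, mem_sphere_iff_norm]
    constructor
    · rintro ⟨ω, hω, rfl⟩
      simp only [hT]
      rw [add_sub_cancel_left, norm_smul, Real.norm_eq_abs, abs_of_pos hρ]
      simp only [sub_zero] at hω
      rw [hω, mul_one]
    · intro hx
      refine ⟨ρ⁻¹ • (x - c), ?_, ?_⟩
      · rw [sub_zero, norm_smul, Real.norm_eq_abs, abs_of_pos (inv_pos.2 hρ), hx,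
          inv_mul_cancel₀ hρ.ne']
      · simp only [hT, smul_smul, mul_inv_cancel₀ hρ.ne', one_smul]
        abel
  ext A hA
  rw [Measure.restrict_apply hA, Measure.smul_apply, Measure.map_apply hTc.measurable hA,
    Measure.restrict_apply (hTc.measurable hA), smul_eq_mul, ← himg]
  congr 1
  rw [Set.inter_comm (T ⁻¹' A), Set.image_inter_preimage, hsph, Set.inter_comm]

lemma sphere_integral_cov {n : ℕ} {d : ℝ} (hd : 0 ≤ d) (c : En n) {ρ : ℝ} (hρ : 0 < ρ)
    {E : Type*} [NormedAddCommGroup E] [NormedSpace ℝ E] {f : En n → E} (hf : Continuous f) :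
    ∫ x in Metric.sphere c ρ, f x ∂μH[d]
      = (ρ ^ d) • ∫ ω in Metric.sphere (0 : En n) 1, f (c + ρ • ω) ∂μH[d] := by
  have hTc : Continuous (fun ω : En n => c + ρ • ω) :=
    continuous_const.add (continuous_id.const_smul ρ)
  calc ∫ x in Metric.sphere c ρ, f x ∂μH[d]
      = ∫ x, f x ∂((ENNReal.ofReal (ρ^d)) • Measure.map (fun ω : En n => c + ρ • ω)
          ((μH[d] : Measure (En n)).restrict (Metric.sphere 0 1))) := by
        rw [← sphere_map_measure hd c hρ]
    _ = (ENNReal.ofReal (ρ^d)).toReal • ∫ x, f x ∂(Measure.map (fun ω : En n => c + ρ • ω)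
          ((μH[d] : Measure (En n)).restrict (Metric.sphere 0 1))) := integral_smul_measure _ _
    _ = (ρ^d) • ∫ ω in Metric.sphere (0 : En n) 1, f (c + ρ • ω) ∂μH[d] := by
        rw [integral_map hTc.measurable.aemeasurable hf.aestronglyMeasurable,
          ENNReal.toReal_ofReal (by positivity)]

lemma gradNorm_nonneg' {n : ℕ} (g : En n → ℂ) (ξ : En n) : 0 ≤ gradNorm g ξ :=
  Real.sqrt_nonneg _

lemma fderiv_apply_le_gradNorm {n : ℕ} (g : En n → ℂ) (ξ w : En n) :
    ‖fderiv ℝ g ξ w‖ ≤ gradNorm g ξ * ‖w‖ := by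
  set L := fderiv ℝ g ξ with hL
  have hw : w = ∑ i, w i • EuclideanSpace.single i (1:ℝ) := by
    have := (EuclideanSpace.basisFun (Fin n) ℝ).sum_repr w
    simp only [EuclideanSpace.basisFun_repr, EuclideanSpace.basisFun_apply] at this
    exact this.symm
  have h1 : ‖L w‖ ≤ ∑ i, |w i| * ‖L (EuclideanSpace.single i 1)‖ := by
    conv_lhs => rw [hw]
    rw [map_sum]
    refine le_trans (norm_sum_le _ _) ?_
    refine Finset.sum_le_sum fun i _ => ?_
    rw [_root_.map_smul, norm_smul, Real.norm_eq_abs]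
  have h2 : ∑ i, |w i| * ‖L (EuclideanSpace.single i 1)‖ ≤ gradNorm g ξ * ‖w‖ := by
    have hcs := Finset.sum_mul_sq_le_sq_mul_sq Finset.univ
      (fun i => |w i|) (fun i => ‖L (EuclideanSpace.single i 1)‖)
    have hX : (0:ℝ) ≤ ∑ i, |w i| * ‖L (EuclideanSpace.single i 1)‖ :=
      Finset.sum_nonneg fun i _ => mul_nonneg (abs_nonneg _) (norm_nonneg _)
    have hle := Real.sqrt_le_sqrt hcs
    rw [Real.sqrt_sq hX] at hle
    refine le_trans hle ?_
    rw [Real.sqrt_mul (by positivity)]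
    have e1 : Real.sqrt (∑ i, |w i|^2) = ‖w‖ := by
      rw [EuclideanSpace.norm_eq]
      congr 1
    rw [e1, mul_comm]
    exact le_of_eq rfl
  exact le_trans h1 h2

lemma Kop_eq' {n : ℕ} (hn : 2 ≤ n) {G₁ G₂ : Type*} [NormedAddCommGroup G₁] [NormedAddCommGroup G₂]
    (θ η : En n) (hηθ : ⟪η, θ⟫ < 0) {g₁ : En n → G₁} {g₂ : En n → G₂}
    (h₁ : Continuous g₁) (h₂ : Continuous g₂) {r : ℝ} (hr : 0 < r) (hk : 0 < kval θ η) :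
    Kop θ r g₁ g₂ η = (kval θ η)⁻¹ * ((r * kval θ η) ^ ((n:ℝ)-1) *
      ∫ ω in Metric.sphere (0 : En n) 1,
        ‖g₁ (-(kval θ η • θ) + (r * kval θ η) • ω)‖ *
          ‖g₂ (η - (-(kval θ η • θ) + (r * kval θ η) • ω))‖ ∂μH[(n:ℝ)-1]) := by
  have hd0 : (0:ℝ) ≤ (n:ℝ)-1 := by
    have : (2:ℝ) ≤ (n:ℝ) := by exact_mod_cast hn
    linarith
  rw [Kop, if_pos hηθ]
  congr 1
  have hcov := sphere_integral_cov (n := n) hd0 (-(kval θ η • θ))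
    (mul_pos hr hk) (f := fun ξ => ‖g₁ ξ‖ * ‖g₂ (η - ξ)‖)
    ((h₁.norm).mul ((h₂.comp (continuous_const.sub continuous_id)).norm))
  rw [ewald, hcov, smul_eq_mul]

set_option maxHeartbeats 2000000

/-- Derivative in `r` of the spherical operator (from the proof of Proposition 3.5):
`r ↦ S_{θ,r}(q)(η)` is differentiable on `(0,∞)` and for `r ∈ (1-δ,1+δ)`,
`|d/dr S_{θ,r}(q)(η)| ≤ C (K_r(𝓕q,𝓕q) + k K_r(|∇𝓕q|,𝓕q) + k K_r(𝓕q,|∇𝓕q|))(η)`,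
with `C = C(n,δ)`. -/
theorem spherical_operator_derivative_bound (n : ℕ) (hn : 2 ≤ n)
    (δ : ℝ) (hδ0 : 0 < δ) (hδ1 : δ < 1) :
    ∃ C : ℝ, 0 < C ∧ ∀ θ : En n, ‖θ‖ = 1 → ∀ q : 𝓢(En n, ℂ),
      ∀ η : En n, ⟪η, θ⟫ < 0 → η ≠ 0 →
        ∃ D : ℝ → ℂ,
          (∀ r ∈ Set.Ioi (0 : ℝ), HasDerivAt (fun s : ℝ => Sop θ s ⇑q η) (D r) r) ∧
          (∀ r ∈ Set.Ioo (1 - δ) (1 + δ),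
            ‖D r‖ ≤ C * (Kop θ r (𝓕 ⇑q) (𝓕 ⇑q) η
              + kval θ η * Kop θ r (gradNorm (𝓕 ⇑q)) (𝓕 ⇑q) η
              + kval θ η * Kop θ r (𝓕 ⇑q) (gradNorm (𝓕 ⇑q)) η)) := by
  have hd0 : (0:ℝ) ≤ (n:ℝ)-1 := by
    have h2 : (2:ℝ) ≤ (n:ℝ) := by exact_mod_cast hn
    linarith
  have hδ' : (0:ℝ) < 1 - δ := by linarith
  have hCpos : (0:ℝ) < 1 + (n:ℝ)/(1-δ) := by
    have h := div_nonneg (by positivity : (0:ℝ) ≤ (n:ℝ)) hδ'.le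
    linarith
  refine ⟨1 + (n:ℝ)/(1-δ), hCpos, ?_⟩
  intro θ hθ q η hηθ hη0
  set C : ℝ := 1 + (n:ℝ)/(1-δ) with hCdef
  have hC1 : 1 ≤ C := by
    have h := div_nonneg (by positivity : (0:ℝ) ≤ (n:ℝ)) hδ'.le
    rw [hCdef]; linarith
  set k : ℝ := kval θ η with hk
  have hk0 : 0 < k := by
    rw [hk, kval]
    refine div_pos_of_neg_of_neg ?_ ?_
    · have h := norm_pos_iff.2 hη0
      nlinarith
    · rw [real_inner_comm]; exact hηθ
  set c : En n := -(k • θ) with hc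
  set f : En n → ℂ := 𝓕 ⇑q with hf
  obtain ⟨F, hF⟩ : ∃ F : 𝓢(En n, ℂ), ⇑F = f :=
    ⟨SchwartzMap.fourierTransformCLM ℝ q, by
      rw [SchwartzMap.fourierTransformCLM_apply]; exact SchwartzMap.fourier_coe q⟩
  have hsmooth : ContDiff ℝ ((⊤:ℕ∞) : WithTop ℕ∞) f := hF ▸ F.smooth ⊤
  have hfc : Continuous f := hsmooth.continuous
  have hfd : Differentiable ℝ f :=
    hsmooth.differentiable (by simp)
  have hfderiv_cont : Continuous (fderiv ℝ f) :=
    hsmooth.continuous_fderiv (by simp)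
  obtain ⟨M0, hM0p, hM0⟩ : ∃ M0 : ℝ, 0 < M0 ∧ ∀ x, ‖f x‖ ≤ M0 := by
    obtain ⟨C0, hC0p, hC0⟩ := F.decay 0 0
    exact ⟨C0, hC0p, fun x => by
      have h := hC0 x
      simpa [norm_iteratedFDeriv_zero, hF] using h⟩
  obtain ⟨M1, hM1p, hM1⟩ : ∃ M1 : ℝ, 0 < M1 ∧ ∀ x, ‖fderiv ℝ f x‖ ≤ M1 := by
    obtain ⟨C0, hC0p, hC0⟩ := (SchwartzMap.fderivCLM ℝ (En n) ℂ F).decay 0 0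
    exact ⟨C0, hC0p, fun x => by
      have h := hC0 x
      simpa [norm_iteratedFDeriv_zero, SchwartzMap.fderivCLM_apply, hF] using h⟩
  have hgradb : ∀ z, gradNorm f z ≤ Real.sqrt n * M1 := by
    intro z
    rw [gradNorm]
    have hsum : ∑ i : Fin n, ‖fderiv ℝ f z (EuclideanSpace.single i 1)‖^2
        ≤ ∑ _i : Fin n, M1^2 := by
      refine Finset.sum_le_sum fun i _ => ?_
      have h1 : ‖fderiv ℝ f z (EuclideanSpace.single i 1)‖ ≤ M1 := by
        refine le_trans ((fderiv ℝ f z).le_opNorm _) ?_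
        rw [EuclideanSpace.norm_single, norm_one, mul_one]
        exact hM1 z
      nlinarith [norm_nonneg (fderiv ℝ f z (EuclideanSpace.single i 1))]
    refine le_trans (Real.sqrt_le_sqrt hsum) ?_
    rw [Finset.sum_const, Finset.card_univ, Fintype.card_fin, nsmul_eq_mul,
      Real.sqrt_mul (by positivity), Real.sqrt_sq hM1p.le]
  have hgradc : Continuous (gradNorm f) := by
    apply Real.continuous_sqrt.comp
    apply continuous_finset_sum
    intro i _
    exact ((hfderiv_cont.clm_apply continuous_const).norm).pow 2
  set μ₁ : Measure (En n) := (μH[(n:ℝ)-1] : Measure (En n)).restrict (Metric.sphere 0 1)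
    with hμ₁
  haveI hfin : IsFiniteMeasure μ₁ := by
    constructor
    rw [hμ₁, Measure.restrict_apply_univ]
    exact sphere_hausdorff_lt_top hn
  set v : En n → En n := fun ω => k • ω with hv
  set Pm : ℝ → En n → En n := fun s ω => c + s • v ω with hPm
  set Qm : ℝ → En n → En n := fun s ω => (η - c) - s • v ω with hQm
  set Fn : ℝ → En n → ℂ := fun s ω => f (Pm s ω) * f (Qm s ω) with hFn
  set Fn' : ℝ → En n → ℂ := fun s ω =>
    fderiv ℝ f (Pm s ω) (v ω) * f (Qm s ω) + f (Pm s ω) * fderiv ℝ f (Qm s ω) (-(v ω)) with hFn'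
  have hvc : Continuous v := continuous_id.const_smul k
  have hPc : ∀ s, Continuous (Pm s) := fun s => continuous_const.add (hvc.const_smul s)
  have hQc : ∀ s, Continuous (Qm s) := fun s => continuous_const.sub (hvc.const_smul s)
  have hFnc : ∀ s, Continuous (Fn s) := fun s => (hfc.comp (hPc s)).mul (hfc.comp (hQc s))
  have hFn'c : ∀ s, Continuous (Fn' s) := by
    intro s
    apply Continuous.add
    · exact ((hfderiv_cont.comp (hPc s)).clm_apply hvc).mul (hfc.comp (hQc s))
    · exact (hfc.comp (hPc s)).mul ((hfderiv_cont.comp (hQc s)).clm_apply hvc.neg)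
  have hnormω : ∀ᵐ ω ∂μ₁, ‖ω‖ = 1 := by
    filter_upwards [ae_restrict_mem (Metric.isClosed_sphere.measurableSet)] with ω hω
    simpa using mem_sphere_zero_iff_norm.1 hω
  have hvnorm : ∀ ω : En n, ‖ω‖ = 1 → ‖v ω‖ = k := by
    intro ω hω
    rw [hv]
    simp only [norm_smul, Real.norm_eq_abs, abs_of_pos hk0, hω, mul_one]
  have hFn_deriv : ∀ (s : ℝ) (ω : En n), HasDerivAt (fun u => Fn u ω) (Fn' s ω) s := by
    intro s ω
    have hp : HasDerivAt (fun u : ℝ => c + u • v ω) (v ω) s := by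
      simpa using ((hasDerivAt_id s).smul_const (v ω)).const_add c
    have hq : HasDerivAt (fun u : ℝ => (η - c) - u • v ω) (-(v ω)) s := by
      simpa using ((hasDerivAt_id s).smul_const (v ω)).const_sub (η - c)
    have h1 : HasDerivAt (fun u : ℝ => f (Pm u ω)) (fderiv ℝ f (Pm s ω) (v ω)) s := by
      simpa [Function.comp_def] using
        ((hfd (Pm s ω)).hasFDerivAt.comp_hasDerivAt s hp)
    have h2 : HasDerivAt (fun u : ℝ => f (Qm u ω)) (fderiv ℝ f (Qm s ω) (-(v ω))) s := by
      simpa [Function.comp_def] using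
        ((hfd (Qm s ω)).hasFDerivAt.comp_hasDerivAt s hq)
    simpa [hFn, hFn', map_neg, mul_neg, Pi.mul_def] using h1.mul h2
  have hkey : ∀ r0 : ℝ, Integrable (Fn' r0) μ₁ ∧
      HasDerivAt (fun s => ∫ ω, Fn s ω ∂μ₁) (∫ ω, Fn' r0 ω ∂μ₁) r0 := by
    intro r0
    refine hasDerivAt_integral_of_dominated_loc_of_deriv_le
      (bound := fun _ => 2*(M1*(k*M0))) (Metric.ball_mem_nhds r0 one_pos) ?_ ?_ ?_ ?_ ?_ ?_
    · exact Filter.Eventually.of_forall fun s => (hFnc s).aestronglyMeasurable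
    · refine (integrable_const (M0*M0)).mono' (hFnc r0).aestronglyMeasurable
        (Filter.Eventually.of_forall fun ω => ?_)
      calc ‖Fn r0 ω‖ = ‖f (Pm r0 ω)‖ * ‖f (Qm r0 ω)‖ := norm_mul _ _
        _ ≤ M0 * M0 := mul_le_mul (hM0 _) (hM0 _) (norm_nonneg _) hM0p.le
    · exact (hFn'c r0).aestronglyMeasurable
    · filter_upwards [hnormω] with ω hω
      intro s _
      have hvk : ‖v ω‖ = k := hvnorm ω hω
      have hb1 : ‖fderiv ℝ f (Pm s ω) (v ω)‖ ≤ M1 * k := by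
        refine le_trans ((fderiv ℝ f (Pm s ω)).le_opNorm _) ?_
        rw [hvk]
        exact mul_le_mul_of_nonneg_right (hM1 _) hk0.le
      have hb2 : ‖fderiv ℝ f (Qm s ω) (-(v ω))‖ ≤ M1 * k := by
        refine le_trans ((fderiv ℝ f (Qm s ω)).le_opNorm _) ?_
        rw [norm_neg, hvk]
        exact mul_le_mul_of_nonneg_right (hM1 _) hk0.le
      calc ‖Fn' s ω‖ ≤ ‖fderiv ℝ f (Pm s ω) (v ω) * f (Qm s ω)‖
            + ‖f (Pm s ω) * fderiv ℝ f (Qm s ω) (-(v ω))‖ := norm_add_le _ _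
        _ = ‖fderiv ℝ f (Pm s ω) (v ω)‖ * ‖f (Qm s ω)‖
            + ‖f (Pm s ω)‖ * ‖fderiv ℝ f (Qm s ω) (-(v ω))‖ := by rw [norm_mul, norm_mul]
        _ ≤ (M1 * k) * M0 + M0 * (M1 * k) := by
            refine add_le_add (mul_le_mul hb1 (hM0 _) (norm_nonneg _) (by positivity))
              (mul_le_mul (hM0 _) hb2 (norm_nonneg _) hM0p.le)
        _ = 2*(M1*(k*M0)) := by ring
    · exact integrable_const _
    · exact Filter.Eventually.of_forall fun ω s _ => hFn_deriv s ω
  set φ : ℝ → ℂ := fun s => ∫ ω, Fn s ω ∂μ₁ with hφ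
  set φ' : ℝ → ℂ := fun s => ∫ ω, Fn' s ω ∂μ₁ with hφ'
  set coeff : ℝ → ℝ := fun s => (k*(s+1))⁻¹ * ((s*k) ^ ((n:ℝ)-1)) with hcoeff
  set coeff' : ℝ → ℝ := fun s => (-(k) / (k*(s+1))^2) * ((s*k) ^ ((n:ℝ)-1))
      + (k*(s+1))⁻¹ * (((n:ℝ)-1) * (s*k) ^ ((n:ℝ)-1-1) * k) with hcoeff'
  have hSopEq : ∀ s : ℝ, 0 < s → Sop θ s ⇑q η = coeff s • φ s := by
    intro s hs
    rw [Sop, if_pos hηθ]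
    have hcov := sphere_integral_cov (n := n) hd0 c (mul_pos hs hk0)
      (f := fun ξ => f ξ * f (η - ξ))
      (hfc.mul (hfc.comp (continuous_const.sub continuous_id)))
    have he : ewald θ η s = Metric.sphere c (s * k) := by rw [ewald, hc, hk]
    rw [← hk, ← hf, he, hcov]
    have hint : (∫ ω in Metric.sphere (0:En n) 1,
        f (c + (s*k) • ω) * f (η - (c + (s*k) • ω)) ∂μH[(n:ℝ)-1]) = φ s := by
      refine integral_congr_ae (Filter.Eventually.of_forall fun ω => ?_)
      show f (c + (s*k) • ω) * f (η - (c + (s*k) • ω)) = Fn s ω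
      rw [hFn]
      simp only [hPm, hQm, hv, ← mul_smul, sub_add_eq_sub_sub]
    rw [hint, smul_smul, hcoeff]
  have hcoeffD : ∀ r : ℝ, 0 < r → HasDerivAt coeff (coeff' r) r := by
    intro r hr0
    have h1 : HasDerivAt (fun s : ℝ => k*(s+1)) k r := by
      simpa using ((hasDerivAt_id r).add_const 1).const_mul k
    have h2 : HasDerivAt (fun s : ℝ => (k*(s+1))⁻¹) (-(k) / (k*(r+1))^2) r :=
      h1.inv (by positivity)
    have h3 : HasDerivAt (fun s : ℝ => (s*k) ^ ((n:ℝ)-1))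
        (((n:ℝ)-1) * (r*k) ^ ((n:ℝ)-1-1) * k) r := by
      have hbase : HasDerivAt (fun s : ℝ => s*k) k r := by
        simpa using (hasDerivAt_id r).mul_const k
      have hrpow := Real.hasDerivAt_rpow_const (x := r*k) (p := (n:ℝ)-1)
        (Or.inl (by positivity : (0:ℝ) < r*k).ne')
      have := hrpow.comp r hbase
      simpa [Function.comp_def, mul_assoc] using this
    have := h2.mul h3
    simpa [hcoeff, hcoeff', Pi.mul_def] using this
  refine ⟨fun r => coeff r • φ' r + coeff' r • φ r, ?_, ?_⟩
  · intro r hr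
    have hr0 : (0:ℝ) < r := hr
    have hψ : HasDerivAt (fun s => coeff s • φ s) (coeff r • φ' r + coeff' r • φ r) r :=
      (hcoeffD r hr0).smul (hkey r).2
    refine hψ.congr_of_eventuallyEq ?_
    filter_upwards [isOpen_Ioi.mem_nhds hr0] with s hs
    exact hSopEq s hs
  · intro r hrIoo
    obtain ⟨hr1, hr2⟩ := hrIoo
    have hr0 : (0:ℝ) < r := by linarith
    have hrk : (0:ℝ) < r * k := mul_pos hr0 hk0
    set A : ℝ := (r*k) ^ ((n:ℝ)-1) with hA
    have hA0 : 0 < A := Real.rpow_pos_of_pos hrk _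
    set J0 : ℝ := ∫ ω, ‖f (Pm r ω)‖ * ‖f (Qm r ω)‖ ∂μ₁ with hJ0
    set J1 : ℝ := ∫ ω, gradNorm f (Pm r ω) * ‖f (Qm r ω)‖ ∂μ₁ with hJ1
    set J2 : ℝ := ∫ ω, ‖f (Pm r ω)‖ * gradNorm f (Qm r ω) ∂μ₁ with hJ2
    have hJ00 : 0 ≤ J0 :=
      integral_nonneg fun ω => mul_nonneg (norm_nonneg _) (norm_nonneg _)
    have hJ10 : 0 ≤ J1 :=
      integral_nonneg fun ω => mul_nonneg (gradNorm_nonneg' f _) (norm_nonneg _)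
    have hJ20 : 0 ≤ J2 :=
      integral_nonneg fun ω => mul_nonneg (norm_nonneg _) (gradNorm_nonneg' f _)
    -- Kop identities
    have hK0 : Kop θ r f f η = k⁻¹ * (A * J0) := by
      rw [hk, Kop_eq' hn θ η hηθ hfc hfc hr0 (hk ▸ hk0), ← hk]
      congr 1
      rw [hA]
      congr 1
      rw [hJ0]
      refine integral_congr_ae (Filter.Eventually.of_forall fun ω => ?_)
      show ‖f (c + (r*k) • ω)‖ * ‖f (η - (c + (r*k) • ω))‖ = _
      simp only [hPm, hQm, hv, ← mul_smul, sub_add_eq_sub_sub]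
    have hK1 : Kop θ r (gradNorm f) f η = k⁻¹ * (A * J1) := by
      rw [hk, Kop_eq' hn θ η hηθ hgradc hfc hr0 (hk ▸ hk0), ← hk]
      congr 1
      rw [hA]
      congr 1
      rw [hJ1]
      refine integral_congr_ae (Filter.Eventually.of_forall fun ω => ?_)
      show ‖gradNorm f (c + (r*k) • ω)‖ * ‖f (η - (c + (r*k) • ω))‖ = _
      rw [Real.norm_of_nonneg (gradNorm_nonneg' f _)]
      simp only [hPm, hQm, hv, ← mul_smul, sub_add_eq_sub_sub]
    have hK2 : Kop θ r f (gradNorm f) η = k⁻¹ * (A * J2) := by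
      rw [hk, Kop_eq' hn θ η hηθ hfc hgradc hr0 (hk ▸ hk0), ← hk]
      congr 1
      rw [hA]
      congr 1
      rw [hJ2]
      refine integral_congr_ae (Filter.Eventually.of_forall fun ω => ?_)
      show ‖f (c + (r*k) • ω)‖ * ‖gradNorm f (η - (c + (r*k) • ω))‖ = _
      rw [Real.norm_of_nonneg (gradNorm_nonneg' f _)]
      simp only [hPm, hQm, hv, ← mul_smul, sub_add_eq_sub_sub]
    -- bounds on φ and φ'
    have hφb : ‖φ r‖ ≤ J0 := by
      refine le_trans (norm_integral_le_integral_norm _) (le_of_eq ?_)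
      refine integral_congr_ae (Filter.Eventually.of_forall fun ω => ?_)
      exact norm_mul _ _
    have hintJ1 : Integrable (fun ω => gradNorm f (Pm r ω) * ‖f (Qm r ω)‖) μ₁ := by
      refine (integrable_const ((Real.sqrt n * M1) * M0)).mono'
        ((hgradc.comp (hPc r)).mul ((hfc.comp (hQc r)).norm)).aestronglyMeasurable
        (Filter.Eventually.of_forall fun ω => ?_)
      rw [Real.norm_of_nonneg (mul_nonneg (gradNorm_nonneg' f _) (norm_nonneg _))]
      exact mul_le_mul (hgradb _) (hM0 _) (norm_nonneg _) (by positivity)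
    have hintJ2 : Integrable (fun ω => ‖f (Pm r ω)‖ * gradNorm f (Qm r ω)) μ₁ := by
      refine (integrable_const (M0 * (Real.sqrt n * M1))).mono'
        (((hfc.comp (hPc r)).norm).mul (hgradc.comp (hQc r))).aestronglyMeasurable
        (Filter.Eventually.of_forall fun ω => ?_)
      rw [Real.norm_of_nonneg (mul_nonneg (norm_nonneg _) (gradNorm_nonneg' f _))]
      exact mul_le_mul (hM0 _) (hgradb _) (gradNorm_nonneg' f _) hM0p.le
    have hφ'b : ‖φ' r‖ ≤ k * J1 + k * J2 := by
      refine le_trans (norm_integral_le_integral_norm _) ?_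
      have hmono : ∫ ω, ‖Fn' r ω‖ ∂μ₁
          ≤ ∫ ω, (k * (gradNorm f (Pm r ω) * ‖f (Qm r ω)‖)
              + k * (‖f (Pm r ω)‖ * gradNorm f (Qm r ω))) ∂μ₁ := by
        refine integral_mono_ae ((hkey r).1.norm)
          ((hintJ1.const_mul k).add (hintJ2.const_mul k)) ?_
        filter_upwards [hnormω] with ω hω
        have hvk : ‖v ω‖ = k := hvnorm ω hω
        have hb1 : ‖fderiv ℝ f (Pm r ω) (v ω)‖ ≤ gradNorm f (Pm r ω) * k := by
          refine le_trans (fderiv_apply_le_gradNorm f _ _) ?_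
          rw [hvk]
        have hb2 : ‖fderiv ℝ f (Qm r ω) (-(v ω))‖ ≤ gradNorm f (Qm r ω) * k := by
          refine le_trans (fderiv_apply_le_gradNorm f _ _) ?_
          rw [norm_neg, hvk]
        calc ‖Fn' r ω‖ ≤ ‖fderiv ℝ f (Pm r ω) (v ω)‖ * ‖f (Qm r ω)‖
              + ‖f (Pm r ω)‖ * ‖fderiv ℝ f (Qm r ω) (-(v ω))‖ := by
              refine le_trans (norm_add_le _ _) ?_
              rw [norm_mul, norm_mul]
          _ ≤ (gradNorm f (Pm r ω) * k) * ‖f (Qm r ω)‖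
              + ‖f (Pm r ω)‖ * (gradNorm f (Qm r ω) * k) := by
              refine add_le_add (mul_le_mul_of_nonneg_right hb1 (norm_nonneg _)) ?_
              exact mul_le_mul_of_nonneg_left hb2 (norm_nonneg _)
          _ = k * (gradNorm f (Pm r ω) * ‖f (Qm r ω)‖)
              + k * (‖f (Pm r ω)‖ * gradNorm f (Qm r ω)) := by ring
      rw [integral_add (hintJ1.const_mul k) (hintJ2.const_mul k),
        integral_const_mul, integral_const_mul] at hmono
      exact hmono
    -- coefficient bounds
    have hcoeffpos : 0 ≤ coeff r := by
      rw [hcoeff]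
      positivity
    have hcoeffb : |coeff r| ≤ C * (k⁻¹ * A) := by
      rw [abs_of_nonneg hcoeffpos, hcoeff]
      have h1 : (k*(r+1))⁻¹ ≤ C * k⁻¹ := by
        rw [mul_inv]
        calc k⁻¹ * (r+1)⁻¹ ≤ k⁻¹ * 1 := by
              refine mul_le_mul_of_nonneg_left ?_ (by positivity)
              rw [inv_le_one_iff₀]
              right; linarith
          _ = k⁻¹ := mul_one _
          _ ≤ C * k⁻¹ := le_mul_of_one_le_left (by positivity) hC1
      calc (k*(r+1))⁻¹ * ((r*k) ^ ((n:ℝ)-1)) ≤ (C * k⁻¹) * ((r*k) ^ ((n:ℝ)-1)) :=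
            mul_le_mul_of_nonneg_right h1 (by positivity)
        _ = C * (k⁻¹ * A) := by rw [hA]; ring
    have hA1 : (r*k) ^ ((n:ℝ)-1-1) = A / (r*k) := by
      rw [show (n:ℝ)-1-1 = ((n:ℝ)-1) + (-1) by ring, Real.rpow_add hrk,
        Real.rpow_neg_one, hA, div_eq_mul_inv]
    have hcoeff'b : |coeff' r| ≤ C * (k⁻¹ * A) := by
      rw [hcoeff']
      refine le_trans (abs_add_le _ _) ?_
      have ha : |(-(k) / (k*(r+1))^2) * ((r*k) ^ ((n:ℝ)-1))| ≤ k⁻¹ * A := by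
        rw [abs_mul, abs_div, abs_neg, abs_of_pos hk0,
          abs_of_pos (by positivity : (0:ℝ) < (k*(r+1))^2),
          abs_of_pos (by positivity : (0:ℝ) < (r*k) ^ ((n:ℝ)-1)), ← hA]
        have h2 : k / (k*(r+1))^2 ≤ k⁻¹ := by
          rw [div_le_iff₀ (by positivity)]
          have h3 : (1:ℝ) ≤ (r+1)^2 := by nlinarith
          calc k = k⁻¹ * k^2 * 1 := by field_simp
            _ ≤ k⁻¹ * k^2 * (r+1)^2 := by
                refine mul_le_mul_of_nonneg_left h3 (by positivity)
            _ = k⁻¹ * (k*(r+1))^2 := by ring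
        exact mul_le_mul_of_nonneg_right h2 hA0.le
      have hb : |(k*(r+1))⁻¹ * (((n:ℝ)-1) * (r*k) ^ ((n:ℝ)-1-1) * k)|
          ≤ ((n:ℝ)/(1-δ)) * (k⁻¹ * A) := by
        have hbeq : (k*(r+1))⁻¹ * (((n:ℝ)-1) * (r*k) ^ ((n:ℝ)-1-1) * k)
            = (((n:ℝ)-1) / ((r+1)*r)) * (k⁻¹ * A) := by
          rw [hA1]
          field_simp
        rw [hbeq, abs_of_nonneg (by positivity)]
        refine mul_le_mul_of_nonneg_right ?_ (by positivity)
        refine div_le_div₀ (by positivity) (by linarith) hδ' ?_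
        nlinarith
      calc |(-(k) / (k*(r+1))^2) * ((r*k) ^ ((n:ℝ)-1))|
            + |(k*(r+1))⁻¹ * (((n:ℝ)-1) * (r*k) ^ ((n:ℝ)-1-1) * k)|
          ≤ k⁻¹ * A + ((n:ℝ)/(1-δ)) * (k⁻¹ * A) := add_le_add ha hb
        _ = C * (k⁻¹ * A) := by rw [hCdef]; ring
    -- final assembly
    rw [hK0, hK1, hK2]
    have hD : ‖coeff r • φ' r + coeff' r • φ r‖
        ≤ |coeff r| * (k * J1 + k * J2) + |coeff' r| * J0 := by
      refine le_trans (norm_add_le _ _) ?_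
      rw [norm_smul, norm_smul, Real.norm_eq_abs, Real.norm_eq_abs]
      refine add_le_add ?_ ?_
      · exact mul_le_mul_of_nonneg_left hφ'b (abs_nonneg _)
      · exact mul_le_mul_of_nonneg_left hφb (abs_nonneg _)
    refine le_trans hD ?_
    have h1 : |coeff r| * (k * J1 + k * J2) ≤ (C * (k⁻¹ * A)) * (k * J1 + k * J2) :=
      mul_le_mul_of_nonneg_right hcoeffb (by positivity)
    have h2 : |coeff' r| * J0 ≤ (C * (k⁻¹ * A)) * J0 :=
      mul_le_mul_of_nonneg_right hcoeff'b hJ00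
    refine le_trans (add_le_add h1 h2) (le_of_eq ?_)
    field_simp
    ring

end
end
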